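/- Let (G,·) be an S-loop with S-subgroup (H,·), let f,g∈H, and let (G,∘) be the Smarandache f,g-principal isotope of (G,·) (an S-loop with S-subgroup (H,∘)). Then SBS(G,·) = SBS(G,∘), where each SBS group is taken relative to the S-subgroup H. -/

import Mathlib

/-- A loop: a quasigroup with a two-sided identity element. -/
structure Loop (G : Type*) where
  mul : G → G → G
  e : G
  one_mul : ∀ x, mul e x = x
  mul_one : ∀ x, mul x e = x
  exU_right : ∀ a b, ∃! x, mul a x = b
  exU_left : ∀ a b, ∃! y, mul y a = b

namespace Loop

variable {G : Type*}

theorem mulRight_bijective (L : Loop G) (a : G) :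
    Function.Bijective (fun y => L.mul y a) := by
  constructor
  · intro x y hxy
    obtain ⟨z, hz, huniq⟩ := L.exU_left a (L.mul x a)
    exact (huniq x rfl).trans (huniq y (by simpa using hxy.symm)).symm
  · intro b
    obtain ⟨z, hz, -⟩ := L.exU_left a b
    exact ⟨z, hz⟩

theorem mulLeft_bijective (L : Loop G) (a : G) :
    Function.Bijective (fun y => L.mul a y) := by
  constructor
  · intro x y hxy
    obtain ⟨z, hz, huniq⟩ := L.exU_right a (L.mul a x)
    exact (huniq x rfl).trans (huniq y (by simpa using hxy.symm)).symm
  · intro b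
    obtain ⟨z, hz, -⟩ := L.exU_right a b
    exact ⟨z, hz⟩

/-- The right translation `R_a : y ↦ y · a`, as a permutation of `G`. -/
noncomputable def Rt (L : Loop G) (a : G) : Equiv.Perm G :=
  Equiv.ofBijective _ (L.mulRight_bijective a)

/-- The left translation `L_a : y ↦ a · y`, as a permutation of `G`. -/
noncomputable def Lt (L : Loop G) (a : G) : Equiv.Perm G :=
  Equiv.ofBijective _ (L.mulLeft_bijective a)

/-- `(U, V, W)` is an autotopism of `L` iff `xU · yV = (x·y)W` for all `x, y`. -/
def IsAutotopism (L : Loop G) (U V W : Equiv.Perm G) : Prop :=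
  ∀ x y, L.mul (U x) (V y) = W (L.mul x y)

/-- The set of autotopism triples of a loop. -/
def AUTset (L : Loop G) : Set (Equiv.Perm G × Equiv.Perm G × Equiv.Perm G) :=
  {T | L.IsAutotopism T.1 T.2.1 T.2.2}

/-- The Bryant–Schneider set: all special maps of the loop. -/
def BSset (L : Loop G) : Set (Equiv.Perm G) :=
  {θ | ∃ f g : G, L.IsAutotopism (θ.trans (L.Rt g)⁻¹) (θ.trans (L.Lt f)⁻¹) θ}

/-- `SSYM`: the bijections of `G` mapping `H` into itself. -/
def SSYMset (H : Set G) : Set (Equiv.Perm G) :=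
  {θ | ∀ h ∈ H, θ h ∈ H}

/-- The Smarandache Bryant–Schneider set relative to the S-subgroup `H`. -/
def SBSset (L : Loop G) (H : Set G) : Set (Equiv.Perm G) :=
  {θ | (∀ h ∈ H, θ h ∈ H) ∧
    ∃ f ∈ H, ∃ g ∈ H, L.IsAutotopism (θ.trans (L.Rt g)⁻¹) (θ.trans (L.Lt f)⁻¹) θ}

/-- `H` is an S-subgroup of the loop `L`: a nontrivial proper subgroup. -/
structure IsSSubgroup (L : Loop G) (H : Set G) : Prop where
  nontrivial : ∃ a ∈ H, a ≠ L.e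
  proper : H ≠ Set.univ
  one_mem : L.e ∈ H
  mul_mem : ∀ a ∈ H, ∀ b ∈ H, L.mul a b ∈ H
  inv_mem : ∀ a ∈ H, ∃ b ∈ H, L.mul a b = L.e ∧ L.mul b a = L.e
  mul_assoc : ∀ a ∈ H, ∀ b ∈ H, ∀ c ∈ H, L.mul (L.mul a b) c = L.mul a (L.mul b c)

/-- The multiplication `x ∘ y = xR_g⁻¹ · yL_f⁻¹` of the `f,g`-principal isotope. -/
noncomputable def isoMul (L : Loop G) (f g : G) (x y : G) : G :=
  L.mul ((L.Rt g)⁻¹ x) ((L.Lt f)⁻¹ y)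

/-- The middle nucleus `N_μ` of a loop. -/
def middleNucleus (L : Loop G) : Set G :=
  {g | ∀ x y, L.mul x (L.mul g y) = L.mul (L.mul x g) y}

/-- `Ω(G,·)`: autotopisms of the form `(θR_g⁻¹, θL_f⁻¹, θ)` with `f, g ∈ H` and
`θ` mapping `H` into itself. -/
def OmegaSet (L : Loop G) (H : Set G) :
    Set (Equiv.Perm G × Equiv.Perm G × Equiv.Perm G) :=
  {T | (∀ h ∈ H, T.2.2 h ∈ H) ∧
    ∃ f ∈ H, ∃ g ∈ H, T.1 = T.2.2.trans (L.Rt g)⁻¹ ∧ T.2.1 = T.2.2.trans (L.Lt f)⁻¹ ∧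
      L.IsAutotopism T.1 T.2.1 T.2.2}

/-- The Smarandache automorphism set `SA(G,·)` relative to `H`. -/
def SAset (L : Loop G) (H : Set G) : Set (Equiv.Perm G) :=
  {θ | (∀ h ∈ H, θ h ∈ H) ∧ ∀ x y, θ (L.mul x y) = L.mul (θ x) (θ y)}

/-- `θ` is an S-isomorphism from `(L, H)` onto `(M, H')`. -/
def IsSIso (L M : Loop G) (H H' : Set G) (θ : Equiv.Perm G) : Prop :=
  (∀ h ∈ H, θ h ∈ H') ∧ ∀ x y, θ (L.mul x y) = M.mul (θ x) (θ y)

/-- `Θ(G,·)`: the pairs `(f,g) ∈ H × H` such that the Smarandache `f,g`-principal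
isotope of `L` is S-isomorphic to `L`. -/
def ThetaSet (L : Loop G) (H : Set G) : Set (G × G) :=
  {p | p.1 ∈ H ∧ p.2 ∈ H ∧
    ∃ M : Loop G, M.mul = L.isoMul p.1 p.2 ∧ ∃ θ : Equiv.Perm G, IsSIso M L H H θ}

/-- A GS-loop: an S-loop that is S-isomorphic to every S-loop isotope of itself. -/
def IsGSLoop (L : Loop G) (H : Set G) : Prop :=
  ∀ M : Loop G,
    (∃ U V W : Equiv.Perm G, ∀ x y, M.mul (U x) (V y) = W (L.mul x y)) →
    (∃ H' : Set G, M.IsSSubgroup H') →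
    ∃ H' : Set G, M.IsSSubgroup H' ∧ ∃ θ : Equiv.Perm G, IsSIso L M H H' θ

end Loop

namespace Loop

variable {G : Type*}

theorem Rt_apply' (L : Loop G) (a x : G) : L.Rt a x = L.mul x a := rfl

theorem Lt_apply' (L : Loop G) (a x : G) : L.Lt a x = L.mul a x := rfl

theorem Rt_inv_eq' (L : Loop G) {a x y : G} (h : L.mul y a = x) :
    (L.Rt a)⁻¹ x = y := by
  subst h; exact Equiv.symm_apply_apply (L.Rt a) y

theorem Lt_inv_eq' (L : Loop G) {a x y : G} (h : L.mul a y = x) :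
    (L.Lt a)⁻¹ x = y := by
  subst h; exact Equiv.symm_apply_apply (L.Lt a) y

theorem mul_Rt_inv (L : Loop G) (a x : G) : L.mul ((L.Rt a)⁻¹ x) a = x :=
  Equiv.apply_symm_apply (L.Rt a) x

theorem mul_Lt_inv (L : Loop G) (a x : G) : L.mul a ((L.Lt a)⁻¹ x) = x :=
  Equiv.apply_symm_apply (L.Lt a) x

theorem Rt_inv_mem (L : Loop G) {H : Set G} (hH : L.IsSSubgroup H) {h k : G}
    (hh : h ∈ H) (hk : k ∈ H) : (L.Rt h)⁻¹ k ∈ H := by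
  obtain ⟨h', hh', e1, e2⟩ := hH.inv_mem h hh
  have : (L.Rt h)⁻¹ k = L.mul k h' := by
    refine L.Rt_inv_eq' ?_
    rw [hH.mul_assoc k hk h' hh' h hh, e2, L.mul_one]
  rw [this]; exact hH.mul_mem k hk h' hh'

theorem Lt_inv_mem (L : Loop G) {H : Set G} (hH : L.IsSSubgroup H) {h k : G}
    (hh : h ∈ H) (hk : k ∈ H) : (L.Lt h)⁻¹ k ∈ H := by
  obtain ⟨h', hh', e1, e2⟩ := hH.inv_mem h hh
  have : (L.Lt h)⁻¹ k = L.mul h' k := by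
    refine L.Lt_inv_eq' ?_
    rw [← hH.mul_assoc h hh h' hh' k hk, e1, L.one_mul]
  rw [this]; exact hH.mul_mem h' hh' k hk

end Loop
/-- Let `(G,·)` be an S-loop with S-subgroup `(H,·)`, let
`f, g ∈ H`, and let `(G,∘)` be the Smarandache `f,g`-principal isotope of `(G,·)`.
Then `SBS(G,·) = SBS(G,∘)`, both taken relative to the S-subgroup `H`. -/
theorem SBS_eq_SBS_isotope {G : Type*} (L : Loop G) (H : Set G) (hH : L.IsSSubgroup H)
    (f g : G) (hf : f ∈ H) (hg : g ∈ H) (M : Loop G) (hM : M.mul = L.isoMul f g) :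
    L.SBSset H = M.SBSset H := by
  have hMmul : ∀ x y, M.mul x y = L.mul ((L.Rt g)⁻¹ x) ((L.Lt f)⁻¹ y) := by
    intro x y; rw [hM]; rfl
  -- inverses of translations of M, expressed via L
  have hMRtinv : ∀ g'' u, (M.Rt g'')⁻¹ u =
      L.mul ((L.Rt ((L.Lt f)⁻¹ g''))⁻¹ u) g := by
    intro g'' u
    refine M.Rt_inv_eq' ?_
    show M.mul _ g'' = u
    rw [hMmul, L.Rt_inv_eq' (y := (L.Rt ((L.Lt f)⁻¹ g''))⁻¹ u) rfl]
    exact L.mul_Rt_inv _ u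
  have hMLtinv : ∀ f'' u, (M.Lt f'')⁻¹ u =
      L.mul f ((L.Lt ((L.Rt g)⁻¹ f''))⁻¹ u) := by
    intro f'' u
    refine M.Lt_inv_eq' ?_
    show M.mul f'' _ = u
    rw [hMmul, L.Lt_inv_eq' (y := (L.Lt ((L.Rt g)⁻¹ f''))⁻¹ u) rfl]
    exact L.mul_Lt_inv _ u
  ext θ
  simp only [Loop.SBSset, Set.mem_setOf_eq]
  constructor
  · rintro ⟨hsym, f', hf', g', hg', hA⟩
    refine ⟨hsym, ?_⟩
    have hA' : ∀ x y, L.mul ((L.Rt g')⁻¹ (θ x)) ((L.Lt f')⁻¹ (θ y)) =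
        θ (L.mul x y) := hA
    set c := (L.Lt f')⁻¹ (θ g) with hc
    set d := (L.Rt g')⁻¹ (θ f) with hd
    have hcH : c ∈ H := L.Lt_inv_mem hH hf' (hsym g hg)
    have hdH : d ∈ H := L.Rt_inv_mem hH hg' (hsym f hf)
    have eq1 : ∀ x, (L.Rt c)⁻¹ (θ (L.mul x g)) = (L.Rt g')⁻¹ (θ x) := fun x =>
      L.Rt_inv_eq' (hA' x g)
    have eq2 : ∀ y, (L.Lt d)⁻¹ (θ (L.mul f y)) = (L.Lt f')⁻¹ (θ y) := fun y =>
      L.Lt_inv_eq' (hA' f y)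
    refine ⟨L.mul d g, hH.mul_mem d hdH g hg, L.mul f c, hH.mul_mem f hf c hcH,
      fun x y => ?_⟩
    show M.mul ((M.Rt (L.mul f c))⁻¹ (θ x)) ((M.Lt (L.mul d g))⁻¹ (θ y)) =
      θ (M.mul x y)
    have hfc : (L.Lt f)⁻¹ (L.mul f c) = c := L.Lt_inv_eq' rfl
    have hdg : (L.Rt g)⁻¹ (L.mul d g) = d := L.Rt_inv_eq' rfl
    rw [hMRtinv, hMLtinv, hfc, hdg, hMmul,
      L.Rt_inv_eq' (y := (L.Rt c)⁻¹ (θ x)) rfl,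
      L.Lt_inv_eq' (y := (L.Lt d)⁻¹ (θ y)) rfl, hMmul]
    have h1 : (L.Rt c)⁻¹ (θ x) = (L.Rt g')⁻¹ (θ ((L.Rt g)⁻¹ x)) := by
      have := eq1 ((L.Rt g)⁻¹ x)
      rwa [L.mul_Rt_inv] at this
    have h2 : (L.Lt d)⁻¹ (θ y) = (L.Lt f')⁻¹ (θ ((L.Lt f)⁻¹ y)) := by
      have := eq2 ((L.Lt f)⁻¹ y)
      rwa [L.mul_Lt_inv] at this
    rw [h1, h2]
    exact hA' _ _
  · rintro ⟨hsym, f'', hf'', g'', hg'', hB⟩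
    refine ⟨hsym, ?_⟩
    set a := (L.Lt f)⁻¹ g'' with ha
    set b := (L.Rt g)⁻¹ f'' with hb
    have haH : a ∈ H := L.Lt_inv_mem hH hf hg''
    have hbH : b ∈ H := L.Rt_inv_mem hH hg hf''
    have hB' : ∀ x y, M.mul ((M.Rt g'')⁻¹ (θ x)) ((M.Lt f'')⁻¹ (θ y)) =
        θ (M.mul x y) := hB
    -- rewrite the M-autotopism condition purely in terms of L
    have hQ : ∀ x y, L.mul ((L.Rt a)⁻¹ (θ (L.mul x g))) ((L.Lt b)⁻¹ (θ (L.mul f y))) =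
        θ (L.mul x y) := by
      intro x y
      have := hB' (L.mul x g) (L.mul f y)
      rw [hMRtinv, hMLtinv, ← ha, ← hb, hMmul, hMmul,
        L.Rt_inv_eq' (y := (L.Rt a)⁻¹ (θ (L.mul x g))) rfl,
        L.Lt_inv_eq' (y := (L.Lt b)⁻¹ (θ (L.mul f y))) rfl,
        L.Rt_inv_eq' (y := x) rfl, L.Lt_inv_eq' (y := y) rfl] at this
      exact this
    set c' := (L.Lt b)⁻¹ (θ f) with hc'
    set d' := (L.Rt a)⁻¹ (θ g) with hd'
    have hc'H : c' ∈ H := L.Lt_inv_mem hH hbH (hsym f hf)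
    have hd'H : d' ∈ H := L.Rt_inv_mem hH haH (hsym g hg)
    have eq1 : ∀ x, (L.Rt c')⁻¹ (θ x) = (L.Rt a)⁻¹ (θ (L.mul x g)) := by
      intro x
      refine L.Rt_inv_eq' ?_
      have := hQ x L.e
      rwa [L.mul_one, L.mul_one] at this
    have eq2 : ∀ y, (L.Lt d')⁻¹ (θ y) = (L.Lt b)⁻¹ (θ (L.mul f y)) := by
      intro y
      refine L.Lt_inv_eq' ?_
      have := hQ L.e y
      rwa [L.one_mul, L.one_mul] at this
    refine ⟨d', hd'H, c', hc'H, fun x y => ?_⟩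
    show L.mul ((L.Rt c')⁻¹ (θ x)) ((L.Lt d')⁻¹ (θ y)) = θ (L.mul x y)
    rw [eq1, eq2]
    exact hQ x y
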